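/- Let u be a quasi-definite moment functional on Π^d and let its Uvarov modification v at N distinct points ξ_1,…,ξ_N with nonzero masses λ_1,…,λ_N be quasi-definite. Then the kernels of u and v are related, for every m ≥ 0, by P_m(v;x,y) = P_m(u;x,y) − 𝖪_m(ξ,x)^t (I_N + Λ𝒦_m)^{−1} Λ 𝖪_m(ξ,y) + 𝖪_{m−1}(ξ,x)^t (I_N + Λ𝒦_{m−1})^{−1} Λ 𝖪_{m−1}(ξ,y) (with 𝖪_{−1} := 0), and, for every n ≥ 0, by K_n(v;x,y) = K_n(u;x,y) − 𝖪_n(ξ,x)^t (I_N + Λ𝒦_n)^{−1} Λ 𝖪_n(ξ,y). -/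

import Mathlib

open MvPolynomial Matrix

/-- The index set for monomials of total degree `n` in `d` variables:
multi-indices (exponent tuples) summing to `n`. Its cardinality is `r_n^d = C(n+d-1,n)`. -/
abbrev Idx (d n : ℕ) : Type := {ν : Fin d → ℕ // ν ∈ Finset.Nat.antidiagonalTuple d n}

/-- The monomial `x^ν` associated with a multi-index `ν` of total degree `n`;
the family `fun α : Idx d n => monIdx α` is the canonical vector `𝕏_n`. -/
noncomputable def monIdx {d n : ℕ} (α : Idx d n) : MvPolynomial (Fin d) ℝ :=
  MvPolynomial.monomial (Finsupp.equivFunOnFinite.symm α.1) 1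

/-- A polynomial system (PS): a sequence of vectors `ℙ_n` of size `r_n^d` whose
entries are polynomials of total degree `n`, the entries of `ℙ_0,…,ℙ_n` forming a
basis of the polynomials of total degree at most `n`. -/
structure PolySystem (d : ℕ) where
  vec : (n : ℕ) → Idx d n → MvPolynomial (Fin d) ℝ
  degree_eq : ∀ n α, (vec n α).totalDegree = n
  indep : LinearIndependent ℝ (fun p : (Σ n : ℕ, Idx d n) => vec p.1 p.2)
  spans : ∀ (n : ℕ) (p : MvPolynomial (Fin d) ℝ), p.totalDegree ≤ n →
    p ∈ Submodule.span ℝ {q | ∃ m ≤ n, ∃ α : Idx d m, q = vec m α}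

/-- `{ℙ_n}` is an orthogonal polynomial system (OPS) with respect to the moment
functional `u` : `⟨u, 𝕏_m ℙ_n^t⟩ = 0` for `m < n` and `⟨u, 𝕏_n ℙ_n^t⟩` nonsingular. -/
def IsOPS {d : ℕ} (u : MvPolynomial (Fin d) ℝ →ₗ[ℝ] ℝ) (P : PolySystem d) : Prop :=
  (∀ m n : ℕ, m < n → ∀ (α : Idx d m) (β : Idx d n), u (monIdx α * P.vec n β) = 0) ∧
  (∀ n : ℕ, IsUnit (Matrix.of fun α β : Idx d n => u (monIdx α * P.vec n β)).det)

/-- `u` is quasi-definite iff it admits an OPS. -/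
def QuasiDefinite {d : ℕ} (u : MvPolynomial (Fin d) ℝ →ₗ[ℝ] ℝ) : Prop :=
  ∃ P : PolySystem d, IsOPS u P

/-- `H_n = ⟨u, ℙ_n ℙ_n^t⟩`. -/
noncomputable def Hmat {d : ℕ} (u : MvPolynomial (Fin d) ℝ →ₗ[ℝ] ℝ) (P : PolySystem d)
    (n : ℕ) : Matrix (Idx d n) (Idx d n) ℝ :=
  Matrix.of fun α β => u (P.vec n α * P.vec n β)

/-- `P_m(u;x,y) = ℙ_m(x)^t H_m⁻¹ ℙ_m(y)`. -/
noncomputable def kerP {d : ℕ} (u : MvPolynomial (Fin d) ℝ →ₗ[ℝ] ℝ) (P : PolySystem d)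
    (m : ℕ) (x y : Fin d → ℝ) : ℝ :=
  ∑ α, ∑ β, eval x (P.vec m α) * (Hmat u P m)⁻¹ α β * eval y (P.vec m β)

/-- `kerLT u P n = K_{n-1}(u;·,·) = Σ_{m<n} P_m(u;·,·)`, so that `kerLT u P 0 = K_{-1} = 0`. -/
noncomputable def kerLT {d : ℕ} (u : MvPolynomial (Fin d) ℝ →ₗ[ℝ] ℝ) (P : PolySystem d)
    (n : ℕ) (x y : Fin d → ℝ) : ℝ :=
  ∑ m ∈ Finset.range n, kerP u P m x y

/-- `𝖯_n(ξ) = (ℙ_n(ξ_1)|⋯|ℙ_n(ξ_N))`. -/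
noncomputable def Pmat {d N : ℕ} (P : PolySystem d) (ξ : Fin N → (Fin d → ℝ)) (n : ℕ) :
    Matrix (Idx d n) (Fin N) ℝ :=
  Matrix.of fun α i => eval (ξ i) (P.vec n α)

/-- `Kmat u P ξ n = 𝒦_{n-1} = (K_{n-1}(u;ξ_i,ξ_j))_{i,j}`, with `𝒦_{-1} = 0`. -/
noncomputable def Kmat {d N : ℕ} (u : MvPolynomial (Fin d) ℝ →ₗ[ℝ] ℝ) (P : PolySystem d)
    (ξ : Fin N → (Fin d → ℝ)) (n : ℕ) : Matrix (Fin N) (Fin N) ℝ :=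
  Matrix.of fun i j => kerLT u P n (ξ i) (ξ j)

/-- `Kvec u P ξ n x = 𝖪_{n-1}(ξ,x) = (K_{n-1}(u;ξ_1,x),…,K_{n-1}(u;ξ_N,x))^t`, with `𝖪_{-1}=0`. -/
noncomputable def Kvec {d N : ℕ} (u : MvPolynomial (Fin d) ℝ →ₗ[ℝ] ℝ) (P : PolySystem d)
    (ξ : Fin N → (Fin d → ℝ)) (n : ℕ) (x : Fin d → ℝ) : Fin N → ℝ :=
  fun i => kerLT u P n (ξ i) x

/-- A PS is monic if the degree-`n` homogeneous part of the entry of `ℙ_n` indexed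
by `α` is exactly the monomial `x^α`. -/
def PolySystem.IsMonic {d : ℕ} (P : PolySystem d) : Prop :=
  ∀ (n : ℕ) (α : Idx d n) (ν : Fin d →₀ ℕ), (ν.sum fun _ e => e) = n →
    MvPolynomial.coeff ν (P.vec n α) = if ν = Finsupp.equivFunOnFinite.symm α.1 then 1 else 0

/-- Multiplication of a real matrix times a vector of polynomials. -/
noncomputable def matVec {d : ℕ} {a b : Type} [Fintype b] (M : Matrix a b ℝ)
    (w : b → MvPolynomial (Fin d) ℝ) (i : a) : MvPolynomial (Fin d) ℝ :=
  ∑ j, M i j • w j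

/-- The matrix `L_{n,i}` determined by `x_i 𝕏_n = L_{n,i} 𝕏_{n+1}`. -/
noncomputable def Lmat (d n : ℕ) (i : Fin d) : Matrix (Idx d n) (Idx d (n + 1)) ℝ :=
  Matrix.of fun α β => if β.1 = (fun j => α.1 j + if j = i then 1 else 0) then 1 else 0

/-- The unique multi-index of degree 0. -/
def zeroIdx {d : ℕ} : Idx d 0 :=
  ⟨fun _ => 0, by simp [Finset.Nat.mem_antidiagonalTuple]⟩

/-- The degree-2 multi-index `e_i + e_j`. -/
def e2 {d : ℕ} (i j : Fin d) : Idx d 2 :=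
  ⟨fun k => (if k = i then 1 else 0) + (if k = j then 1 else 0), by
    simp [Finset.Nat.mem_antidiagonalTuple, Finset.sum_add_distrib]⟩

/-- `A_{h,2} = Σ_{1≤i≤j≤d} a^{(2)}_{ij} L_{h,j} L_{h+1,i}`. -/
noncomputable def Amat2 {d : ℕ} (a2 : Idx d 2 → ℝ) (h : ℕ) :
    Matrix (Idx d h) (Idx d (h + 2)) ℝ :=
  ∑ i : Fin d, ∑ j : Fin d,
    if i ≤ j then a2 (e2 i j) • (Lmat d h j * Lmat d (h + 1) i) else 0

/-- The polynomial `λ(x) = a_2·𝕏_2 + a_1·𝕏_1 + a_0`. -/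
noncomputable def lamPoly {d : ℕ} (a2 : Idx d 2 → ℝ) (a1 : Idx d 1 → ℝ) (a0 : ℝ) :
    MvPolynomial (Fin d) ℝ :=
  (∑ α : Idx d 2, a2 α • monIdx α) + (∑ α : Idx d 1, a1 α • monIdx α) + MvPolynomial.C a0

namespace UvarovAux

variable {d : ℕ}

/-- Multi-index of an `Idx` as a finsupp. -/
noncomputable def toν {n : ℕ} (γ : Idx d n) : Fin d →₀ ℕ := Finsupp.equivFunOnFinite.symm γ.1

lemma monIdx_eq {n : ℕ} (γ : Idx d n) : monIdx γ = monomial (toν γ) 1 := rfl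

lemma coe_toν {n : ℕ} (γ : Idx d n) : ⇑(toν γ) = γ.1 :=
  Finsupp.equivFunOnFinite.apply_symm_apply _

lemma sum_toν {n : ℕ} (γ : Idx d n) : ∑ i, toν γ i = n := by
  have := γ.2
  rw [Finset.Nat.mem_antidiagonalTuple] at this
  simp only [coe_toν]
  exact this

/-- The `Idx` corresponding to a finsupp. -/
def idxOf (ν : Fin d →₀ ℕ) : Idx d (∑ i, ν i) :=
  ⟨⇑ν, by rw [Finset.Nat.mem_antidiagonalTuple]⟩

lemma toν_idxOf (ν : Fin d →₀ ℕ) : toν (idxOf ν) = ν := by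
  simp [toν, idxOf]

lemma monIdx_idxOf (ν : Fin d →₀ ℕ) : monIdx (idxOf ν) = monomial ν 1 := by
  rw [monIdx_eq, toν_idxOf]

lemma finsupp_deg (ν : Fin d →₀ ℕ) : (ν.sum fun _ e => e) = ∑ i, ν i :=
  Finsupp.sum_fintype _ _ (fun _ => rfl)

variable (u : MvPolynomial (Fin d) ℝ →ₗ[ℝ] ℝ) (P : PolySystem d)

lemma u_mul_vec_eq_zero (hP : IsOPS u P) {p : MvPolynomial (Fin d) ℝ} {n : ℕ}
    (hp : p.totalDegree < n) (β : Idx d n) : u (p * P.vec n β) = 0 := by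
  conv_lhs => rw [p.as_sum]
  rw [Finset.sum_mul, map_sum]
  refine Finset.sum_eq_zero fun ν hν => ?_
  have hdeg : (∑ i, ν i) < n := by
    rw [← finsupp_deg]; exact lt_of_le_of_lt (le_totalDegree hν) hp
  have hmono : (monomial ν (coeff ν p) : MvPolynomial (Fin d) ℝ)
      = coeff ν p • monIdx (idxOf ν) := by
    rw [monIdx_idxOf, smul_monomial, smul_eq_mul, mul_one]
  rw [hmono, smul_mul_assoc, u.map_smul, hP.1 _ n hdeg (idxOf ν) β, smul_zero]

lemma ortho (hP : IsOPS u P) {m n : ℕ} (h : m ≠ n) (α : Idx d m) (β : Idx d n) :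
    u (P.vec m α * P.vec n β) = 0 := by
  rcases Ne.lt_or_gt h with h' | h'
  · exact u_mul_vec_eq_zero u P hP (by rw [P.degree_eq]; exact h') β
  · rw [mul_comm]; exact u_mul_vec_eq_zero u P hP (by rw [P.degree_eq]; exact h') α

end UvarovAux
namespace UvarovAux

variable {d : ℕ} (u : MvPolynomial (Fin d) ℝ →ₗ[ℝ] ℝ) (P : PolySystem d)

lemma toν_injective {n : ℕ} : Function.Injective (toν : Idx d n → (Fin d →₀ ℕ)) := by
  intro γ₁ γ₂ h
  have := congrArg (fun f => Finsupp.equivFunOnFinite f) h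
  apply Subtype.ext; rw [← coe_toν γ₁, ← coe_toν γ₂, h]

lemma expand {n : ℕ} {p : MvPolynomial (Fin d) ℝ} (hp : p.totalDegree ≤ n) :
    ∃ b : (m : Fin (n+1)) → Idx d m.1 → ℝ,
      p = ∑ m : Fin (n+1), ∑ α, b m α • P.vec m.1 α := by
  have h := P.spans n p hp
  have hset : {q | ∃ m ≤ n, ∃ α : Idx d m, q = P.vec m α}
      = Set.range (fun s : Σ m : Fin (n+1), Idx d m.1 => P.vec s.1.1 s.2) := by
    ext q
    constructor
    · rintro ⟨m, hm, α, rfl⟩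
      exact ⟨⟨⟨m, Nat.lt_succ_of_le hm⟩, α⟩, rfl⟩
    · rintro ⟨⟨m, α⟩, rfl⟩
      exact ⟨m.1, Nat.lt_succ_iff.mp m.2, α, rfl⟩
  rw [hset] at h
  obtain ⟨c, hc⟩ := (Submodule.mem_span_range_iff_exists_fun ℝ).mp h
  refine ⟨fun m α => c ⟨m, α⟩, ?_⟩
  rw [← hc, ← Finset.univ_sigma_univ, Finset.sum_sigma]

lemma u_mul_vec_top (hP : IsOPS u P) {p : MvPolynomial (Fin d) ℝ} {n : ℕ}
    (hp : p.totalDegree ≤ n) (β : Idx d n) :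
    u (p * P.vec n β) = ∑ γ : Idx d n, coeff (toν γ) p * u (monIdx γ * P.vec n β) := by
  have hL : u (p * P.vec n β)
      = ∑ ν ∈ p.support, coeff ν p * u ((monomial ν 1 : MvPolynomial (Fin d) ℝ) * P.vec n β) := by
    conv_lhs => rw [p.as_sum]
    rw [Finset.sum_mul, map_sum]
    refine Finset.sum_congr rfl fun ν hν => ?_
    have hmono : (monomial ν (coeff ν p) : MvPolynomial (Fin d) ℝ)
        = coeff ν p • (monomial ν 1 : MvPolynomial (Fin d) ℝ) := by
      rw [smul_monomial, smul_eq_mul, mul_one]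
    rw [hmono, smul_mul_assoc, u.map_smul, smul_eq_mul]
  rw [hL]
  rw [← Finset.sum_filter_add_sum_filter_not p.support (fun ν => (∑ i, ν i) = n)]
  have h2 : ∑ ν ∈ p.support.filter (fun ν => ¬ (∑ i, ν i) = n),
      coeff ν p * u ((monomial ν 1 : MvPolynomial (Fin d) ℝ) * P.vec n β) = 0 := by
    refine Finset.sum_eq_zero fun ν hν => ?_
    rw [Finset.mem_filter] at hν
    have hlt : (∑ i, ν i) < n := by
      have h1 : (∑ i, ν i) ≤ n := by
        rw [← finsupp_deg]; exact le_trans (le_totalDegree hν.1) hp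
      omega
    rw [← monIdx_idxOf, hP.1 _ n hlt (idxOf ν) β, mul_zero]
  rw [h2, add_zero]
  have hR : ∑ γ : Idx d n, coeff (toν γ) p * u (monIdx γ * P.vec n β)
      = ∑ ν ∈ Finset.univ.image (toν : Idx d n → (Fin d →₀ ℕ)),
          coeff ν p * u ((monomial ν 1 : MvPolynomial (Fin d) ℝ) * P.vec n β) := by
    rw [Finset.sum_image (fun γ _ γ' _ h => toν_injective h)]
    rfl
  rw [hR]
  refine Finset.sum_subset ?_ ?_
  · intro ν hν
    rw [Finset.mem_filter] at hν
    refine Finset.mem_image.mpr ⟨⟨⇑ν, ?_⟩, Finset.mem_univ _, ?_⟩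
    · rw [Finset.Nat.mem_antidiagonalTuple]; exact hν.2
    · exact Finsupp.equivFunOnFinite_symm_coe ν
  · intro ν hν hν'
    obtain ⟨γ, _, rfl⟩ := Finset.mem_image.mp hν
    rw [Finset.mem_filter, not_and] at hν'
    by_cases hs : toν γ ∈ p.support
    · exact absurd (sum_toν γ) (hν' hs)
    · rw [notMem_support_iff.mp hs, zero_mul]

end UvarovAux
namespace UvarovAux

variable {d : ℕ} (u : MvPolynomial (Fin d) ℝ →ₗ[ℝ] ℝ) (P : PolySystem d)

/-- Leading-coefficient matrix of `ℙ_n`. -/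
noncomputable def Cmat (P : PolySystem d) (n : ℕ) : Matrix (Idx d n) (Idx d n) ℝ :=
  Matrix.of fun α γ => coeff (toν γ) (P.vec n α)

/-- `D_n = ⟨u, 𝕏_n ℙ_n^t⟩`. -/
noncomputable def Dmat (n : ℕ) : Matrix (Idx d n) (Idx d n) ℝ :=
  Matrix.of fun α β => u (monIdx α * P.vec n β)

lemma Hmat_eq (hP : IsOPS u P) (n : ℕ) : Hmat u P n = Cmat P n * Dmat u P n := by
  ext α β
  rw [Matrix.mul_apply]
  exact u_mul_vec_top u P hP (le_of_eq (P.degree_eq n α)) β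

lemma cmat_unit (n : ℕ) : IsUnit (Cmat P n).det := by
  rw [isUnit_iff_ne_zero, Ne, ← Matrix.exists_vecMul_eq_zero_iff]
  rintro ⟨c, hc, hc0⟩
  apply hc
  have hcoeffq : ∀ ν : Fin d →₀ ℕ, (∑ i, ν i) = n →
      coeff ν (∑ α, c α • P.vec n α) = 0 := by
    intro ν hν
    have hγmem : ⇑ν ∈ Finset.Nat.antidiagonalTuple d n := by
      rw [Finset.Nat.mem_antidiagonalTuple]; exact hν
    have h1 := congrFun hc0 (⟨⇑ν, hγmem⟩ : Idx d n)
    have h2 : toν (⟨⇑ν, hγmem⟩ : Idx d n) = ν := Finsupp.equivFunOnFinite_symm_coe ν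
    simp only [Matrix.vecMul, dotProduct, Cmat, Matrix.of_apply, h2,
      Pi.zero_apply] at h1
    rw [MvPolynomial.coeff_sum]
    simpa [MvPolynomial.coeff_smul, smul_eq_mul] using h1
  have hqdeg : (∑ α, c α • P.vec n α).totalDegree ≤ n := by
    refine (totalDegree_finset_sum _ _).trans (Finset.sup_le fun α _ => ?_)
    exact (totalDegree_smul_le _ _).trans (le_of_eq (P.degree_eq n α))
  have hq0 : (∑ α, c α • P.vec n α) = 0 := by
    rcases Nat.eq_zero_or_pos n with rfl | hn
    · apply MvPolynomial.eq_zero_iff.mpr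
      intro ν
      by_cases hν : (∑ i, ν i) = 0
      · exact hcoeffq ν hν
      · refine coeff_eq_zero_of_totalDegree_lt (lt_of_le_of_lt hqdeg ?_)
        have h3 : (ν.sum fun _ e => e) = ∑ i ∈ ν.support, ν i := rfl
        rw [← h3, finsupp_deg]
        omega
    · have hdeg : (∑ α, c α • P.vec n α).totalDegree ≤ n - 1 := by
        rw [MvPolynomial.totalDegree]
        refine Finset.sup_le fun ν hν => ?_
        have h1 : (ν.sum fun _ e => e) ≤ n := le_trans (le_totalDegree hν) hqdeg
        have h2 : (∑ i, ν i) ≠ n := fun h =>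
          (mem_support_iff.mp hν) (hcoeffq ν h)
        rw [finsupp_deg] at h1 ⊢
        omega
      have hmem := P.spans (n-1) _ hdeg
      have hset : {r | ∃ m ≤ n - 1, ∃ α : Idx d m, r = P.vec m α}
          = (fun s : Σ k, Idx d k => P.vec s.1 s.2) '' {s | s.1 < n} := by
        ext r
        constructor
        · rintro ⟨m, hm, α, rfl⟩
          exact ⟨⟨m, α⟩, by simpa using (by omega : m < n), rfl⟩
        · rintro ⟨⟨m, α⟩, hs, rfl⟩
          have : m < n := hs
          exact ⟨m, by omega, α, rfl⟩
      rw [hset] at hmem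
      have hmem2 : (∑ α, c α • P.vec n α) ∈ Submodule.span ℝ
          ((fun s : Σ k, Idx d k => P.vec s.1 s.2) '' {s | s.1 = n}) := by
        refine Submodule.sum_mem _ fun α _ => Submodule.smul_mem _ _ ?_
        exact Submodule.subset_span ⟨⟨n, α⟩, rfl, rfl⟩
      have hdisj := P.indep.disjoint_span_image
        (s := {s : Σ k, Idx d k | s.1 = n}) (t := {s | s.1 < n}) (by
          rw [Set.disjoint_left]
          rintro ⟨m, α⟩ h1 h2
          simp only [Set.mem_setOf_eq] at h1 h2
          omega)
      exact Submodule.disjoint_def.mp hdisj _ hmem2 hmem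
  have li : LinearIndependent ℝ (fun α : Idx d n => P.vec n α) :=
    P.indep.comp (fun α => ⟨n, α⟩) sigma_mk_injective
  funext α
  exact Fintype.linearIndependent_iff.mp li c hq0 α

lemma hmat_unit (hP : IsOPS u P) (n : ℕ) : IsUnit (Hmat u P n).det := by
  rw [Hmat_eq u P hP n, Matrix.det_mul]
  exact (cmat_unit P n).mul (hP.2 n)

lemma hmat_symm (n : ℕ) : (Hmat u P n)ᵀ = Hmat u P n := by
  ext α β
  simp only [Matrix.transpose_apply, Hmat, Matrix.of_apply, mul_comm]

lemma hinv_symm (n : ℕ) (α β : Idx d n) :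
    (Hmat u P n)⁻¹ α β = (Hmat u P n)⁻¹ β α := by
  have h : ((Hmat u P n)⁻¹)ᵀ = (Hmat u P n)⁻¹ := by
    rw [Matrix.transpose_nonsing_inv, hmat_symm]
  conv_lhs => rw [← h]
  rfl

end UvarovAux
namespace UvarovAux

variable {d : ℕ} (u : MvPolynomial (Fin d) ℝ →ₗ[ℝ] ℝ) (P : PolySystem d)

/-- The kernel `K_{n-1}(u;x,·)` as a polynomial in the second variable. -/
noncomputable def kerpoly (n : ℕ) (x : Fin d → ℝ) : MvPolynomial (Fin d) ℝ :=
  ∑ m ∈ Finset.range n, ∑ α, ∑ β,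
    (eval x (P.vec m α) * (Hmat u P m)⁻¹ α β) • P.vec m β

lemma eval_kerpoly (n : ℕ) (x y : Fin d → ℝ) :
    eval y (kerpoly u P n x) = kerLT u P n x y := by
  simp only [kerpoly, kerLT, kerP, map_sum, smul_eval, mul_assoc]

lemma kerpoly_deg (n : ℕ) (x : Fin d → ℝ) :
    (kerpoly u P (n+1) x).totalDegree ≤ n := by
  refine (totalDegree_finset_sum _ _).trans (Finset.sup_le fun m hm => ?_)
  refine (totalDegree_finset_sum _ _).trans (Finset.sup_le fun α _ => ?_)
  refine (totalDegree_finset_sum _ _).trans (Finset.sup_le fun β _ => ?_)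
  refine (totalDegree_smul_le _ _).trans ?_
  rw [P.degree_eq]
  exact Nat.lt_succ_iff.mp (Finset.mem_range.mp hm)

lemma repro_basis (hP : IsOPS u P) {n k : ℕ} (hk : k ≤ n) (γ : Idx d k)
    (x : Fin d → ℝ) :
    u (kerpoly u P (n+1) x * P.vec k γ) = eval x (P.vec k γ) := by
  rw [kerpoly, Finset.sum_mul, map_sum,
    Finset.sum_eq_single k
      (fun m _ hmk => by
        rw [Finset.sum_mul, map_sum]
        refine Finset.sum_eq_zero fun α _ => ?_
        rw [Finset.sum_mul, map_sum]
        refine Finset.sum_eq_zero fun β _ => ?_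
        rw [smul_mul_assoc, u.map_smul, ortho u P hP hmk β γ, smul_zero])
      (fun h => absurd (Finset.mem_range.mpr (Nat.lt_succ_of_le hk)) h)]
  simp only [Finset.sum_mul, map_sum, smul_mul_assoc, u.map_smul, smul_eq_mul]
  have hterm : ∀ α : Idx d k,
      ∑ β, eval x (P.vec k α) * (Hmat u P k)⁻¹ α β * u (P.vec k β * P.vec k γ)
      = eval x (P.vec k α) * ((Hmat u P k)⁻¹ * Hmat u P k) α γ := by
    intro α
    rw [Matrix.mul_apply, Finset.mul_sum]
    exact Finset.sum_congr rfl fun β _ => by rw [mul_assoc]; rfl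
  calc ∑ α, ∑ β, eval x (P.vec k α) * (Hmat u P k)⁻¹ α β * u (P.vec k β * P.vec k γ)
      = ∑ α, eval x (P.vec k α) * ((Hmat u P k)⁻¹ * Hmat u P k) α γ :=
        Finset.sum_congr rfl fun α _ => hterm α
    _ = eval x (P.vec k γ) := by
        rw [Matrix.nonsing_inv_mul _ (hmat_unit u P hP k)]
        simp [Matrix.one_apply]

lemma repro (hP : IsOPS u P) {n : ℕ} {p : MvPolynomial (Fin d) ℝ}
    (hp : p.totalDegree ≤ n) (x : Fin d → ℝ) :
    u (kerpoly u P (n+1) x * p) = eval x p := by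
  obtain ⟨b, rfl⟩ := expand P hp
  simp only [Finset.mul_sum, map_sum, mul_smul_comm, u.map_smul, smul_eq_mul, smul_eval]
  exact Finset.sum_congr rfl fun m _ => Finset.sum_congr rfl fun α _ => by
    rw [repro_basis u P hP (Nat.lt_succ_iff.mp m.2) α x]

lemma nondeg (hP : IsOPS u P) {n : ℕ} {q : MvPolynomial (Fin d) ℝ}
    (hq : q.totalDegree ≤ n)
    (h : ∀ k ≤ n, ∀ β : Idx d k, u (q * P.vec k β) = 0) : q = 0 := by
  obtain ⟨b, rfl⟩ := expand P hq
  have hb : ∀ m : Fin (n+1), b m = 0 := by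
    intro m
    have hvm : Matrix.vecMul (b m) (Hmat u P m.1) = 0 := by
      funext β
      have h0 := h m.1 (Nat.lt_succ_iff.mp m.2) β
      rw [Finset.sum_mul, map_sum,
        Finset.sum_eq_single m
          (fun m' _ hm' => by
            rw [Finset.sum_mul, map_sum]
            refine Finset.sum_eq_zero fun α _ => ?_
            have hne : m'.1 ≠ m.1 := fun hh => hm' (Fin.val_injective hh)
            rw [smul_mul_assoc, u.map_smul, ortho u P hP hne α β, smul_zero])
          (fun hm => absurd (Finset.mem_univ m) hm)] at h0
      simp only [Finset.sum_mul, map_sum, smul_mul_assoc, u.map_smul, smul_eq_mul] at h0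
      simpa [Matrix.vecMul, dotProduct, Hmat] using h0
    have := congrArg (fun w => Matrix.vecMul w (Hmat u P m.1)⁻¹) hvm
    simpa [Matrix.vecMul_vecMul, Matrix.mul_nonsing_inv _ (hmat_unit u P hP m.1),
      Matrix.vecMul_one, Matrix.zero_vecMul] using this
  refine Finset.sum_eq_zero fun m _ => Finset.sum_eq_zero fun α _ => ?_
  rw [hb m]
  simp

lemma kerP_symm (m : ℕ) (x y : Fin d → ℝ) :
    kerP u P m x y = kerP u P m y x := by
  rw [kerP, kerP, Finset.sum_comm]
  refine Finset.sum_congr rfl fun α _ => Finset.sum_congr rfl fun β _ => ?_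
  rw [hinv_symm u P m β α]
  ring

lemma kerLT_symm (n : ℕ) (x y : Fin d → ℝ) :
    kerLT u P n x y = kerLT u P n y x := by
  unfold kerLT
  exact Finset.sum_congr rfl fun m _ => kerP_symm u P m x y

end UvarovAux
namespace UvarovAux

variable {d N : ℕ}

lemma part2' (u v : MvPolynomial (Fin d) ℝ →ₗ[ℝ] ℝ)
    (ξ : Fin N → (Fin d → ℝ)) (lam : Fin N → ℝ)
    (hv : ∀ p : MvPolynomial (Fin d) ℝ, v p = u p + ∑ i, lam i * eval (ξ i) p)
    (P : PolySystem d) (hP : IsOPS u P) (Q : PolySystem d) (hQ : IsOPS v Q)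
    (n : ℕ) (x y : Fin d → ℝ) :
    kerLT v Q n x y = kerLT u P n x y -
      ∑ i, ∑ j, Kvec u P ξ n x i *
        (((1 + Matrix.diagonal lam * Kmat u P ξ n)⁻¹ * Matrix.diagonal lam) i j) *
          Kvec u P ξ n y j := by
  cases n with
  | zero => simp [kerLT, Kvec]
  | succ n =>
    set M : Matrix (Fin N) (Fin N) ℝ := 1 + Matrix.diagonal lam * Kmat u P ξ (n+1) with hM
    have hKsym : ∀ i j, Kmat u P ξ (n+1) i j = Kmat u P ξ (n+1) j i := fun i j =>
      kerLT_symm u P (n+1) (ξ i) (ξ j)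
    -- the fundamental identity relating the two kernels
    have star : ∀ x z : Fin d → ℝ, kerLT u P (n+1) x z = kerLT v Q (n+1) x z
        + ∑ i, lam i * (kerLT v Q (n+1) x (ξ i) * kerLT u P (n+1) z (ξ i)) := by
      intro x z
      have h1 : v (kerpoly v Q (n+1) x * kerpoly u P (n+1) z)
          = eval x (kerpoly u P (n+1) z) :=
        repro v Q hQ (kerpoly_deg u P n z) x
      rw [hv] at h1
      have h2 : u (kerpoly v Q (n+1) x * kerpoly u P (n+1) z)
          = eval z (kerpoly v Q (n+1) x) := by
        rw [mul_comm]; exact repro u P hP (kerpoly_deg v Q n x) z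
      rw [h2] at h1
      simp only [_root_.map_mul, eval_kerpoly] at h1
      rw [kerLT_symm u P (n+1) x z]
      exact h1.symm
    -- vector equation:  a(w) (I + ΛK) = b(w)
    have hvec : ∀ w : Fin d → ℝ,
        Matrix.vecMul (fun i => kerLT v Q (n+1) w (ξ i)) M = Kvec u P ξ (n+1) w := by
      intro w
      funext j
      have hkv : Kvec u P ξ (n+1) w j = kerLT u P (n+1) w (ξ j) :=
        kerLT_symm u P (n+1) (ξ j) w
      simp only [Matrix.vecMul, dotProduct, hM, Matrix.add_apply,
        Matrix.one_apply, Matrix.diagonal_mul, mul_add, mul_ite, mul_one, mul_zero,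
        Finset.sum_add_distrib, Finset.sum_ite_eq, Finset.sum_ite_eq', Finset.mem_univ, if_true]
      rw [hkv, star w (ξ j)]
      congr 1
      refine Finset.sum_congr rfl fun i _ => ?_
      rw [show kerLT u P (n+1) (ξ j) (ξ i) = Kmat u P ξ (n+1) j i from rfl, hKsym j i]
      ring
    -- invertibility of M
    have hMdet : IsUnit M.det := by
      rw [isUnit_iff_ne_zero, Ne, ← Matrix.exists_mulVec_eq_zero_iff]
      rintro ⟨c, hc, hc0⟩
      apply hc
      set q : MvPolynomial (Fin d) ℝ := ∑ i, c i • kerpoly u P (n+1) (ξ i) with hqdef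
      have hqdeg : q.totalDegree ≤ n :=
        (totalDegree_finset_sum _ _).trans (Finset.sup_le fun i _ =>
          (totalDegree_smul_le _ _).trans (kerpoly_deg u P n (ξ i)))
      have hqev : ∀ j, eval (ξ j) q = ∑ i, Kmat u P ξ (n+1) j i * c i := by
        intro j
        rw [hqdef, map_sum]
        refine Finset.sum_congr rfl fun i _ => ?_
        rw [smul_eval, eval_kerpoly,
          show kerLT u P (n+1) (ξ i) (ξ j) = Kmat u P ξ (n+1) i j from rfl, hKsym i j]
        ring
      have hc0' : ∀ j, c j + ∑ i, lam j * (Kmat u P ξ (n+1) j i * c i) = 0 := by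
        intro j
        have h0 := congrFun hc0 j
        simp only [Matrix.mulVec, dotProduct, hM, Matrix.add_apply,
          Matrix.one_apply, Matrix.diagonal_mul, add_mul, ite_mul, one_mul, zero_mul,
          Finset.sum_add_distrib, Finset.sum_ite_eq, Finset.sum_ite_eq', Finset.mem_univ, if_true,
          Pi.zero_apply, mul_assoc] at h0
        exact h0
      have hev : ∀ j, lam j * eval (ξ j) q = - c j := by
        intro j
        rw [hqev j, Finset.mul_sum]
        have h6 := hc0' j
        have h7 : ∑ i, lam j * (Kmat u P ξ (n+1) j i * c i) = - c j := by linarith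
        exact h7
      have hnull : ∀ k, k ≤ n → ∀ β : Idx d k, v (q * Q.vec k β) = 0 := by
        intro k hk β
        rw [hv]
        have hu : u (q * Q.vec k β) = ∑ i, c i * eval (ξ i) (Q.vec k β) := by
          rw [hqdef, Finset.sum_mul, map_sum]
          refine Finset.sum_congr rfl fun i _ => ?_
          rw [smul_mul_assoc, u.map_smul, smul_eq_mul,
            repro u P hP (by rw [Q.degree_eq]; exact hk) (ξ i)]
        rw [hu]
        simp only [_root_.map_mul]
        have hstep : ∑ j, lam j * (eval (ξ j) q * eval (ξ j) (Q.vec k β))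
            = ∑ j, (- c j) * eval (ξ j) (Q.vec k β) := by
          refine Finset.sum_congr rfl fun j _ => ?_
          rw [← hev j]; ring
        rw [hstep, ← Finset.sum_add_distrib]
        exact Finset.sum_eq_zero fun i _ => by ring
      have hq0 : q = 0 := nondeg v Q hQ hqdeg hnull
      funext j
      have h5 := hqev j
      rw [hq0] at h5
      simp only [map_zero] at h5
      have h6 := hc0' j
      have h7 : ∑ i, lam j * (Kmat u P ξ (n+1) j i * c i) = 0 := by
        rw [← Finset.mul_sum, ← h5, mul_zero]
      simp only [Pi.zero_apply]
      linarith
    -- solve for the v-kernel vector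
    have hMinv : ∀ w : Fin d → ℝ, (fun i => kerLT v Q (n+1) w (ξ i))
        = Matrix.vecMul (Kvec u P ξ (n+1) w) M⁻¹ := by
      intro w
      rw [← hvec w, Matrix.vecMul_vecMul, Matrix.mul_nonsing_inv _ hMdet,
        Matrix.vecMul_one]
    have hs := star x y
    have hAx : ∀ i, kerLT v Q (n+1) x (ξ i)
        = ∑ j, Kvec u P ξ (n+1) x j * M⁻¹ j i := by
      intro i
      have h9 := congrFun (hMinv x) i
      rw [h9]
      simp [Matrix.vecMul, dotProduct]
    have hS : ∑ i, lam i * (kerLT v Q (n+1) x (ξ i) * kerLT u P (n+1) y (ξ i))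
        = ∑ i, ∑ j, Kvec u P ξ (n+1) x i * ((M⁻¹ * Matrix.diagonal lam) i j)
            * Kvec u P ξ (n+1) y j := by
      conv_rhs => rw [Finset.sum_comm]
      refine Finset.sum_congr rfl fun i _ => ?_
      rw [hAx i, Finset.sum_mul, Finset.mul_sum]
      refine Finset.sum_congr rfl fun j _ => ?_
      rw [Matrix.mul_diagonal,
        show kerLT u P (n+1) y (ξ i) = Kvec u P ξ (n+1) y i from
          kerLT_symm u P (n+1) y (ξ i)]
      ring
    rw [← hS]
    linarith [hs]

end UvarovAux
/-- Theorem 3.4. The kernels of a quasi-definite moment functional `u`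
and of its quasi-definite Uvarov modification `v` are related by
`P_m(v;x,y) = P_m(u;x,y) - 𝖪_m(ξ,x)^t (I_N+Λ𝒦_m)⁻¹ Λ 𝖪_m(ξ,y)
  + 𝖪_{m-1}(ξ,x)^t (I_N+Λ𝒦_{m-1})⁻¹ Λ 𝖪_{m-1}(ξ,y)` for `m ≥ 0`, and
`K_n(v;x,y) = K_n(u;x,y) - 𝖪_n(ξ,x)^t (I_N+Λ𝒦_n)⁻¹ Λ 𝖪_n(ξ,y)` for `n ≥ 0`. -/
theorem uvarov_kernels
    {d N : ℕ} (hd : 1 ≤ d) (hN : 1 ≤ N)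
    (u v : MvPolynomial (Fin d) ℝ →ₗ[ℝ] ℝ)
    (ξ : Fin N → (Fin d → ℝ)) (hξ : Function.Injective ξ)
    (lam : Fin N → ℝ) (hlam : ∀ i, lam i ≠ 0)
    (hv : ∀ p : MvPolynomial (Fin d) ℝ, v p = u p + ∑ i, lam i * eval (ξ i) p)
    (P : PolySystem d) (hP : IsOPS u P)
    (Q : PolySystem d) (hQ : IsOPS v Q) :
    (∀ (m : ℕ) (x y : Fin d → ℝ),
      kerP v Q m x y = kerP u P m x y -
        (∑ i, ∑ j, Kvec u P ξ (m + 1) x i *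
          (((1 + Matrix.diagonal lam * Kmat u P ξ (m + 1))⁻¹ * Matrix.diagonal lam) i j) *
            Kvec u P ξ (m + 1) y j) +
        (∑ i, ∑ j, Kvec u P ξ m x i *
          (((1 + Matrix.diagonal lam * Kmat u P ξ m)⁻¹ * Matrix.diagonal lam) i j) *
            Kvec u P ξ m y j)) ∧
    (∀ (n : ℕ) (x y : Fin d → ℝ),
      kerLT v Q (n + 1) x y = kerLT u P (n + 1) x y -
        ∑ i, ∑ j, Kvec u P ξ (n + 1) x i *
          (((1 + Matrix.diagonal lam * Kmat u P ξ (n + 1))⁻¹ * Matrix.diagonal lam) i j) *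
            Kvec u P ξ (n + 1) y j) := by
  constructor
  · intro m x y
    have h1 := UvarovAux.part2' u v ξ lam hv P hP Q hQ (m+1) x y
    have h0 := UvarovAux.part2' u v ξ lam hv P hP Q hQ m x y
    have e1 : kerLT v Q (m+1) x y = kerLT v Q m x y + kerP v Q m x y := by
      rw [kerLT, kerLT, Finset.sum_range_succ]
    have e2 : kerLT u P (m+1) x y = kerLT u P m x y + kerP u P m x y := by
      rw [kerLT, kerLT, Finset.sum_range_succ]
    rw [e1, e2] at h1
    linarith [h0, h1]
  · intro n x y
    exact UvarovAux.part2' u v ξ lam hv P hP Q hQ (n+1) x y
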